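/- Lower bound direction of the chain rule for trade-off functions: with X, X' having common finite support and Y, Y' jointly distributed as above, for every rejection rule φ on pairs (x,y) with type I error E_{x∼X}E_{y∼Y|X=x}[φ(x,y)] ≤ α, the type II error satisfies 1 - E_{x∼X'}E_{y'∼Y'|X'=x}[φ(x,y')] ≥ inf{E_{x∼X'}[f_x(α_x)] : E_{x∼X}[α_x] ≤ α}, where f_x = T(Y|_{X=x}, Y'|_{X'=x}). -/
import Mathlib

open Finset

def IsPMF {Ω : Type*} [Fintype Ω] (p : Ω → ℝ) : Prop :=
  (∀ x, 0 ≤ p x) ∧ ∑ x, p x = 1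

noncomputable def tradeoff {Ω : Type*} [Fintype Ω] (p q : Ω → ℝ) (α : ℝ) : ℝ :=
  sInf { β | ∃ φ : Ω → ℝ, (∀ x, φ x ∈ Set.Icc (0:ℝ) 1) ∧
    (∑ x, p x * φ x) ≤ α ∧ β = 1 - ∑ x, q x * φ x }

lemma sum_phi_mem_Icc {Ω : Type*} [Fintype Ω] {q : Ω → ℝ} (hq : IsPMF q)
    {ψ : Ω → ℝ} (hψ : ∀ x, ψ x ∈ Set.Icc (0:ℝ) 1) :
    (∑ x, q x * ψ x) ∈ Set.Icc (0:ℝ) 1 := by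
  constructor
  · exact Finset.sum_nonneg fun x _ => mul_nonneg (hq.1 x) (hψ x).1
  · calc ∑ x, q x * ψ x ≤ ∑ x, q x := by
          exact Finset.sum_le_sum fun x _ => by
            nlinarith [(hψ x).2, hq.1 x]
      _ = 1 := hq.2

lemma tradeoff_nonneg {Ω : Type*} [Fintype Ω] {q : Ω → ℝ} (hq : IsPMF q)
    (p : Ω → ℝ) (α : ℝ) : 0 ≤ tradeoff p q α := by
  apply Real.sInf_nonneg
  rintro β ⟨ψ, hψ, -, rfl⟩
  linarith [(sum_phi_mem_Icc hq hψ).2]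

lemma tradeoff_le {Ω : Type*} [Fintype Ω] {p q : Ω → ℝ} (hq : IsPMF q)
    {ψ : Ω → ℝ} (hψ : ∀ x, ψ x ∈ Set.Icc (0:ℝ) 1) {α : ℝ}
    (h : (∑ x, p x * ψ x) ≤ α) :
    tradeoff p q α ≤ 1 - ∑ x, q x * ψ x := by
  apply csInf_le
  · refine ⟨0, ?_⟩
    rintro β ⟨ψ', hψ', -, rfl⟩
    linarith [(sum_phi_mem_Icc hq hψ').2]
  · exact ⟨ψ, hψ, h, rfl⟩

/-- Lower bound direction of the chain rule for trade-off functions: every joint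
rejection rule `φ(x,y)` with type I error at most `α` has type II error at least
`inf { E_{x∼X'}[f_x(α_x)] : E_{x∼X}[α_x] ≤ α }`, where
`f_x = T(Y|_{X=x}, Y'|_{X'=x})`. -/
theorem tradeoff_chain_rule_lower_bound {𝒳 𝒴 : Type*} [Fintype 𝒳] [Fintype 𝒴]
    (pX pX' : 𝒳 → ℝ) (hX : IsPMF pX) (hX' : IsPMF pX')
    (hsupp : ∀ x, pX x ≠ 0 ↔ pX' x ≠ 0)
    (kY kY' : 𝒳 → 𝒴 → ℝ) (hkY : ∀ x, IsPMF (kY x)) (hkY' : ∀ x, IsPMF (kY' x))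
    (α : ℝ) (hα : α ∈ Set.Icc (0:ℝ) 1)
    (φ : 𝒳 × 𝒴 → ℝ) (hφ : ∀ p, φ p ∈ Set.Icc (0:ℝ) 1)
    (htypeI : ∑ x, pX x * ∑ y, kY x y * φ (x, y) ≤ α) :
    sInf { v | ∃ a : 𝒳 → ℝ, (∀ x, a x ∈ Set.Icc (0:ℝ) 1) ∧
        (∑ x, pX x * a x) ≤ α ∧
        v = ∑ x, pX' x * tradeoff (kY x) (kY' x) (a x) } ≤
      1 - ∑ x, pX' x * ∑ y, kY' x y * φ (x, y) := by
  set a : 𝒳 → ℝ := fun x => ∑ y, kY x y * φ (x, y) with ha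
  have haIcc : ∀ x, a x ∈ Set.Icc (0:ℝ) 1 := fun x =>
    sum_phi_mem_Icc (hkY x) (fun y => hφ (x, y))
  set v : ℝ := ∑ x, pX' x * tradeoff (kY x) (kY' x) (a x) with hv
  have hmem : v ∈ { v | ∃ a : 𝒳 → ℝ, (∀ x, a x ∈ Set.Icc (0:ℝ) 1) ∧
        (∑ x, pX x * a x) ≤ α ∧
        v = ∑ x, pX' x * tradeoff (kY x) (kY' x) (a x) } := ⟨a, haIcc, htypeI, rfl⟩
  have hbdd : BddBelow { v | ∃ a : 𝒳 → ℝ, (∀ x, a x ∈ Set.Icc (0:ℝ) 1) ∧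
        (∑ x, pX x * a x) ≤ α ∧
        v = ∑ x, pX' x * tradeoff (kY x) (kY' x) (a x) } := by
    refine ⟨0, ?_⟩
    rintro w ⟨b, hb, -, rfl⟩
    exact Finset.sum_nonneg fun x _ =>
      mul_nonneg (hX'.1 x) (tradeoff_nonneg (hkY' x) _ _)
  refine le_trans (csInf_le hbdd hmem) ?_
  have hle : ∀ x, pX' x * tradeoff (kY x) (kY' x) (a x) ≤
      pX' x * (1 - ∑ y, kY' x y * φ (x, y)) := fun x =>
    mul_le_mul_of_nonneg_left
      (tradeoff_le (hkY' x) (fun y => hφ (x, y)) le_rfl) (hX'.1 x)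
  calc v ≤ ∑ x, pX' x * (1 - ∑ y, kY' x y * φ (x, y)) :=
        Finset.sum_le_sum fun x _ => hle x
    _ = 1 - ∑ x, pX' x * ∑ y, kY' x y * φ (x, y) := by
        simp [mul_sub, Finset.sum_sub_distrib, hX'.2]
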